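/- arXiv:math/0606297 — 3 statements merged into one kernel-verified Lean document; each statement's English description precedes it below -/
import Mathlib

section
/- Let β > 0 and let {ℓ_n}_{n≥1} be a decreasing sequence of positive reals tending to 0 satisfying condition (Θ). Then for every b > 0, the integral ∫₀^b exp( Σ_{n : ℓ_n^β ≥ t} ℓ_n ) dt is finite if and only if the series Σ_{n=1}^∞ e^{ℓ_1+ℓ_2+⋯+ℓ_n} / n^{1+β} converges. -/
open Filter Set

noncomputable section

/-- The circle `C` of circumference 1, i.e. `ℝ/ℤ`. -/
abbrev Circle1 : Type := AddCircle (1 : ℝ)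

/-- The open arc of length `L` centered at `u` on the circle. -/
def arcSet (u : Circle1) (L : ℝ) : Set Circle1 :=
  {x | ∃ r : ℝ, |r| < L / 2 ∧ x = u + (r : Circle1)}

/-- `{ℓ_n}_{n ≥ 1}` is a decreasing sequence of positive reals tending to `0`
with `ℓ 1 ≤ 1/2`.  (The value `ℓ 0` is irrelevant.) -/
structure LengthSeq (ℓ : ℕ → ℝ) : Prop where
  pos : ∀ n, 1 ≤ n → 0 < ℓ n
  anti : ∀ m n, 1 ≤ m → m ≤ n → ℓ n ≤ ℓ m
  tendsto_zero : Filter.Tendsto ℓ Filter.atTop (nhds 0)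
  first_le : ℓ 1 ≤ 1 / 2

/-- Condition (Θ): there are `0 < M₀ ≤ M₁ < ∞` with `M₀/n ≤ ℓ n ≤ M₁/n` for all `n ≥ 1`. -/
def ThetaCond (ℓ : ℕ → ℝ) : Prop :=
  ∃ M₀ M₁ : ℝ, 0 < M₀ ∧ M₀ ≤ M₁ ∧ ∀ n : ℕ, 1 ≤ n → M₀ / n ≤ ℓ n ∧ ℓ n ≤ M₁ / n

/-- `u_n := ∏_{k=1}^n (1 - ℓ_k)`. -/
def partProd (ℓ : ℕ → ℝ) (n : ℕ) : ℝ := ∏ k ∈ Finset.Icc 1 n, (1 - ℓ k)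

/-- Convergence of the series `Σ_{n≥1} e^{ℓ_1+⋯+ℓ_n} / n^{1+β}`. -/
def coverSeriesSummable (ℓ : ℕ → ℝ) (β : ℝ) : Prop :=
  Summable (fun n : ℕ => Real.exp (∑ k ∈ Finset.Icc 1 n, ℓ k) / (n : ℝ) ^ (1 + β))

/-- `β₀ := inf { β : Σ_{n≥1} e^{ℓ_1+⋯+ℓ_n} / n^{1+β} < ∞ }`. -/
def beta0 (ℓ : ℕ → ℝ) : ℝ := sInf {β : ℝ | coverSeriesSummable ℓ β}

/-- The set of points of the circle covered by infinitely many of the arcs with centers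
`c n` and lengths `ℓ n`, `n ≥ 1`; this is `E = limsup_n I_n`. -/
def limsupArcs (ℓ : ℕ → ℝ) (c : ℕ → Circle1) : Set Circle1 :=
  {x | ∀ N : ℕ, ∃ n : ℕ, N ≤ n ∧ 1 ≤ n ∧ x ∈ arcSet (c n) (ℓ n)}

/-- The Brownian model: the centers `U n` of the arcs perform independent Brownian
motions on the circle (variance `t` at time `t`), each started uniformly. -/
structure BrownianModel (ℓ : ℕ → ℝ) where
  Ω : Type
  [mΩ : MeasurableSpace Ω]
  P : MeasureTheory.Measure Ω
  prob : MeasureTheory.IsProbabilityMeasure P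
  U : ℕ → ℝ → Ω → Circle1
  meas : ∀ n t, Measurable (U n t)
  cont : ∀ n ω, Continuous fun t => U n t ω
  indep : ProbabilityTheory.iIndepFun
      (fun n ω => fun t : ℝ => U n t ω) P
  init : ∀ n, MeasureTheory.Measure.map (U n 0) P = (MeasureTheory.volume : MeasureTheory.Measure Circle1)
  incr : ∀ n s t, 0 ≤ s → s ≤ t →
      MeasureTheory.Measure.map (fun ω => U n t ω - U n s ω) P
        = MeasureTheory.Measure.map (fun x : ℝ => (x : Circle1))
            (ProbabilityTheory.gaussianReal 0 (Real.toNNReal (t - s)))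
  indepIncr : ∀ (n : ℕ) (ts : ℕ → ℝ), (∀ i, 0 ≤ ts i) → Monotone ts →
      ProbabilityTheory.iIndepFun
        (fun i : ℕ => if i = 0 then U n (ts 0)
          else fun ω => U n (ts i) ω - U n (ts (i - 1)) ω) P

/-- The (bad) set `F_t` of points covered by only finitely many arcs at time `t`,
in the Brownian model. -/
def BrownianModel.F {ℓ : ℕ → ℝ} (M : BrownianModel ℓ) (t : ℝ) (ω : M.Ω) : Set Circle1 :=
  (limsupArcs ℓ fun n => M.U n t ω)ᶜ

/-- The Poisson model with parameter `α`: arc `n` is re-centered uniformly at the points of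
an independent Poisson process of rate `ℓ n ^ (-α)`; `C n j` is its `j`-th center and
`Y n j` the `j`-th waiting time. -/
structure PoissonModel (ℓ : ℕ → ℝ) (α : ℝ) where
  Ω : Type
  [mΩ : MeasurableSpace Ω]
  P : MeasureTheory.Measure Ω
  prob : MeasureTheory.IsProbabilityMeasure P
  C : ℕ → ℕ → Ω → Circle1
  Y : ℕ → ℕ → Ω → ℝ
  measC : ∀ n j, Measurable (C n j)
  measY : ∀ n j, Measurable (Y n j)
  distC : ∀ n j, MeasureTheory.Measure.map (C n j) P
      = (MeasureTheory.volume : MeasureTheory.Measure Circle1)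
  distY : ∀ n j, MeasureTheory.Measure.map (Y n j) P
      = ProbabilityTheory.expMeasure (ℓ n ^ (-α))
  indep : ProbabilityTheory.iIndepFun
      (fun i : (ℕ × ℕ) ⊕ (ℕ × ℕ) => Sum.elim
        (fun p (ω : Ω) => (Sum.inl (C p.1 p.2 ω) : Circle1 ⊕ ℝ))
        (fun p (ω : Ω) => (Sum.inr (Y p.1 p.2 ω) : Circle1 ⊕ ℝ)) i) P

/-- `T n j`: the time of the `j`-th update of arc `n` (so `T n 0 = 0`). -/
def PoissonModel.T {ℓ : ℕ → ℝ} {α : ℝ} (M : PoissonModel ℓ α) (n j : ℕ) (ω : M.Ω) : ℝ :=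
  ∑ k ∈ Finset.range j, M.Y n k ω

/-- The center of arc `n` at time `t`: `U n t = C n j` for `t ∈ [T n j, T n (j+1))`. -/
def PoissonModel.U {ℓ : ℕ → ℝ} {α : ℝ} (M : PoissonModel ℓ α) (n : ℕ) (t : ℝ)
    (ω : M.Ω) : Circle1 :=
  M.C n (sInf {j : ℕ | t < M.T n (j + 1) ω}) ω

/-- The (bad) set `F_t` of points covered by only finitely many arcs at time `t`,
in the Poisson model. -/
def PoissonModel.F {ℓ : ℕ → ℝ} {α : ℝ} (M : PoissonModel ℓ α) (t : ℝ) (ω : M.Ω) :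
    Set Circle1 :=
  (limsupArcs ℓ fun n => M.U n t ω)ᶜ


/-- `Σ_{n : ℓ_n^β ≥ t} ℓ_n`: the sum of `ℓ n` over the indices `n ≥ 1` with `ℓ n ^ β ≥ t`. -/
def tailSum (ℓ : ℕ → ℝ) (β t : ℝ) : ℝ :=
  ∑' n : ℕ, if 1 ≤ n ∧ t ≤ ℓ n ^ β then ℓ n else 0

namespace Lemma21Aux

open MeasureTheory Filter Real
open scoped NNReal ENNReal

/-- Partial sums `S n = ℓ 1 + ⋯ + ℓ n`. -/
private def Sl (ℓ : ℕ → ℝ) (n : ℕ) : ℝ := ∑ k ∈ Finset.Icc 1 n, ℓ k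

variable {ℓ : ℕ → ℝ} {β : ℝ}

private lemma Sl_nonneg (hℓ : LengthSeq ℓ) (n : ℕ) : 0 ≤ Sl ℓ n :=
  Finset.sum_nonneg fun k hk => (hℓ.pos k (Finset.mem_Icc.1 hk).1).le

private lemma Sl_mono (hℓ : LengthSeq ℓ) {m n : ℕ} (h : m ≤ n) : Sl ℓ m ≤ Sl ℓ n :=
  Finset.sum_le_sum_of_subset_of_nonneg (Finset.Icc_subset_Icc_right h)
    (fun k hk _ => (hℓ.pos k (Finset.mem_Icc.1 hk).1).le)

private lemma Sl_succ (ℓ : ℕ → ℝ) (n : ℕ) : Sl ℓ (n + 1) = Sl ℓ n + ℓ (n + 1) :=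
  Finset.sum_Icc_succ_top (Nat.le_add_left 1 n) ℓ

private lemma ell_le_half (hℓ : LengthSeq ℓ) {n : ℕ} (hn : 1 ≤ n) : ℓ n ≤ 1 / 2 :=
  (hℓ.anti 1 n le_rfl hn).trans hℓ.first_le

private lemma rpow_anti (hℓ : LengthSeq ℓ) (hβ : 0 < β) {i j : ℕ} (hi : 1 ≤ i)
    (hij : i ≤ j) : ℓ j ^ β ≤ ℓ i ^ β :=
  Real.rpow_le_rpow (hℓ.pos j (hi.trans hij)).le (hℓ.anti i j hi hij) hβ.le

private lemma rpow_pos' (hℓ : LengthSeq ℓ) {n : ℕ} (hn : 1 ≤ n) : 0 < ℓ n ^ β :=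
  Real.rpow_pos_of_pos (hℓ.pos n hn) β

private lemma tailSum_eq (hℓ : LengthSeq ℓ) (hβ : 0 < β) {n : ℕ} (hn : 1 ≤ n) {t : ℝ}
    (h1 : ℓ (n + 1) ^ β < t) (h2 : t ≤ ℓ n ^ β) : tailSum ℓ β t = Sl ℓ n := by
  unfold tailSum Sl
  rw [tsum_eq_sum (s := Finset.Icc 1 n) ?_]
  · refine Finset.sum_congr rfl fun k hk => ?_
    simp only [Finset.mem_Icc] at hk
    rw [if_pos]
    exact ⟨hk.1, h2.trans (Real.rpow_le_rpow (hℓ.pos n hn).le (hℓ.anti k n hk.1 hk.2) hβ.le)⟩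
  · intro k hk
    simp only [Finset.mem_Icc, not_and, not_le] at hk
    rw [if_neg]
    rintro ⟨hk1, hk2⟩
    have hkn : n + 1 ≤ k := hk hk1
    have hle : ℓ k ^ β ≤ ℓ (n + 1) ^ β := rpow_anti hℓ hβ (Nat.le_add_left 1 n) hkn
    linarith

private lemma tailSum_eq_zero (hℓ : LengthSeq ℓ) (hβ : 0 < β) {t : ℝ}
    (ht : ℓ 1 ^ β < t) : tailSum ℓ β t = 0 := by
  unfold tailSum
  convert tsum_zero with k
  rw [if_neg]
  rintro ⟨hk1, hk2⟩
  have := rpow_anti (β := β) hℓ hβ le_rfl hk1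
  linarith

private lemma existsBetween (hℓ : LengthSeq ℓ) (hβ : 0 < β) {t : ℝ} (ht : 0 < t)
    (ht2 : t ≤ ℓ 1 ^ β) : ∃ m : ℕ, ℓ (m + 2) ^ β < t ∧ t ≤ ℓ (m + 1) ^ β := by
  have htp : (0 : ℝ) < t ^ (1 / β) := Real.rpow_pos_of_pos ht _
  obtain ⟨m₀, hm₀, hm₀2⟩ := ((hℓ.tendsto_zero.eventually_lt_const htp).and
    (eventually_ge_atTop 2)).exists
  have hx : ℓ m₀ ^ β < t := by
    have h := Real.rpow_lt_rpow (hℓ.pos m₀ (by omega)).le hm₀ hβ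
    rwa [← Real.rpow_mul ht.le, one_div_mul_cancel hβ.ne', Real.rpow_one] at h
  classical
  have hex : ∃ k : ℕ, ℓ (k + 2) ^ β < t := ⟨m₀ - 2, by
    have h2 : m₀ - 2 + 2 = m₀ := by omega
    rwa [h2]⟩
  refine ⟨Nat.find hex, Nat.find_spec hex, ?_⟩
  rcases Nat.eq_zero_or_pos (Nat.find hex) with hk | hk
  · rw [hk]; simpa using ht2
  · have hmin := Nat.find_min hex (Nat.sub_lt hk one_pos)
    push_neg at hmin
    have h3 : Nat.find hex - 1 + 2 = Nat.find hex + 1 := by omega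
    rwa [h3] at hmin

private lemma tailSum_nonneg (hℓ : LengthSeq ℓ) (hβ : 0 < β) {t : ℝ} (ht : 0 < t) :
    0 ≤ tailSum ℓ β t := by
  by_cases h : t ≤ ℓ 1 ^ β
  · obtain ⟨m, h1, h2⟩ := existsBetween hℓ hβ ht h
    rw [tailSum_eq hℓ hβ (n := m + 1) (Nat.le_add_left 1 m) h1 h2]
    exact Sl_nonneg hℓ _
  · rw [tailSum_eq_zero hℓ hβ (not_le.1 h)]

private lemma tailSum_anti (hℓ : LengthSeq ℓ) (hβ : 0 < β) {s t : ℝ} (hs : 0 < s)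
    (hst : s ≤ t) : tailSum ℓ β t ≤ tailSum ℓ β s := by
  by_cases h : t ≤ ℓ 1 ^ β
  · obtain ⟨mt, ht1, ht2⟩ := existsBetween hℓ hβ (hs.trans_le hst) h
    obtain ⟨ms, hs1, hs2⟩ := existsBetween hℓ hβ hs (hst.trans h)
    rw [tailSum_eq hℓ hβ (n := mt + 1) (Nat.le_add_left 1 mt) ht1 ht2,
        tailSum_eq hℓ hβ (n := ms + 1) (Nat.le_add_left 1 ms) hs1 hs2]
    apply Sl_mono hℓ
    by_contra hcon
    push_neg at hcon
    have : ℓ (mt + 1) ^ β ≤ ℓ (ms + 2) ^ β := rpow_anti hℓ hβ (by omega) (by omega)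
    linarith
  · rw [tailSum_eq_zero hℓ hβ (not_le.1 h)]
    exact tailSum_nonneg hℓ hβ hs

private lemma integral_piece (hℓ : LengthSeq ℓ) (hβ : 0 < β) (m : ℕ) :
    (∫⁻ t in Set.Ioc (ℓ (m + 2) ^ β) (ℓ (m + 1) ^ β),
        ENNReal.ofReal (Real.exp (tailSum ℓ β t)))
      = ENNReal.ofReal (Real.exp (Sl ℓ (m + 1)) * (ℓ (m + 1) ^ β - ℓ (m + 2) ^ β)) := by
  have hcg : ∀ t ∈ Set.Ioc (ℓ (m + 2) ^ β) (ℓ (m + 1) ^ β),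
      ENNReal.ofReal (Real.exp (tailSum ℓ β t))
        = ENNReal.ofReal (Real.exp (Sl ℓ (m + 1))) := fun t ht => by
    rw [tailSum_eq hℓ hβ (n := m + 1) (Nat.le_add_left 1 m) ht.1 ht.2]
  rw [setLIntegral_congr_fun measurableSet_Ioc hcg, setLIntegral_const,
      Real.volume_Ioc, ← ENNReal.ofReal_mul (Real.exp_nonneg _)]

private lemma iUnion_pieces (hℓ : LengthSeq ℓ) (hβ : 0 < β) :
    ⋃ m : ℕ, Set.Ioc (ℓ (m + 2) ^ β) (ℓ (m + 1) ^ β) = Set.Ioc 0 (ℓ 1 ^ β) := by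
  ext t
  simp only [Set.mem_iUnion, Set.mem_Ioc]
  constructor
  · rintro ⟨m, h1, h2⟩
    exact ⟨(rpow_pos' hℓ (by omega)).trans h1,
      h2.trans (rpow_anti hℓ hβ le_rfl (by omega))⟩
  · rintro ⟨h1, h2⟩
    exact existsBetween hℓ hβ h1 h2

private lemma pieces_disj (hℓ : LengthSeq ℓ) (hβ : 0 < β) :
    Pairwise (Function.onFun Disjoint
      fun m : ℕ => Set.Ioc (ℓ (m + 2) ^ β) (ℓ (m + 1) ^ β)) := by
  have key : ∀ i j : ℕ, i < j →
      Disjoint (Set.Ioc (ℓ (i + 2) ^ β) (ℓ (i + 1) ^ β))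
        (Set.Ioc (ℓ (j + 2) ^ β) (ℓ (j + 1) ^ β)) := by
    intro i j hij
    refine Set.disjoint_left.2 ?_
    rintro x ⟨hx1, _⟩ ⟨_, hx4⟩
    have : ℓ (j + 1) ^ β ≤ ℓ (i + 2) ^ β := rpow_anti hℓ hβ (by omega) (by omega)
    linarith
  intro i j hij
  rcases hij.lt_or_gt with h | h
  · exact key i j h
  · exact (key j i h).symm

private lemma tsum_ofReal_ne_top_iff {f : ℕ → ℝ} (hf : ∀ n, 0 ≤ f n) :
    (∑' n, ENNReal.ofReal (f n)) ≠ ⊤ ↔ Summable f := by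
  rw [show (fun n => ENNReal.ofReal (f n))
      = fun n => ((Real.toNNReal (f n) : ℝ≥0) : ℝ≥0∞) from rfl,
    ENNReal.tsum_coe_ne_top_iff_summable_coe]
  exact summable_congr fun n => by rw [Real.coe_toNNReal _ (hf n)]

private lemma integral_lt_top_iff (hℓ : LengthSeq ℓ) (hβ : 0 < β) :
    (∫⁻ t in Set.Ioc 0 (ℓ 1 ^ β), ENNReal.ofReal (Real.exp (tailSum ℓ β t))) < ⊤
      ↔ Summable (fun m : ℕ =>
          Real.exp (Sl ℓ (m + 1)) * (ℓ (m + 1) ^ β - ℓ (m + 2) ^ β)) := by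
  have hmain : (∫⁻ t in Set.Ioc 0 (ℓ 1 ^ β), ENNReal.ofReal (Real.exp (tailSum ℓ β t)))
      = ∑' m : ℕ, ENNReal.ofReal
          (Real.exp (Sl ℓ (m + 1)) * (ℓ (m + 1) ^ β - ℓ (m + 2) ^ β)) := by
    rw [← iUnion_pieces hℓ hβ,
      lintegral_iUnion (fun m => measurableSet_Ioc) (pieces_disj hℓ hβ)]
    exact tsum_congr fun m => integral_piece hℓ hβ m
  rw [hmain, lt_top_iff_ne_top]
  apply tsum_ofReal_ne_top_iff
  intro m
  have h1 : ℓ (m + 2) ^ β ≤ ℓ (m + 1) ^ β := rpow_anti hℓ hβ (by omega) (by omega)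
  have h2 := Real.exp_nonneg (Sl ℓ (m + 1))
  nlinarith

private lemma abel_summable {a b : ℕ → ℝ} (ha0 : ∀ n, 0 < a n) (hamono : Monotone a)
    (hb0 : ∀ n, 0 ≤ b n) (hbanti : ∀ n, b (n + 1) ≤ b n)
    (hblim : Tendsto b atTop (nhds 0)) :
    Summable (fun n => a n * (b n - b (n + 1)))
      ↔ Summable (fun n => (a (n + 1) - a n) * b (n + 1)) := by
  set P : ℕ → ℝ := fun n => a n * (b n - b (n + 1)) with hP
  set Q : ℕ → ℝ := fun n => (a (n + 1) - a n) * b (n + 1) with hQ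
  have hP0 : ∀ n, 0 ≤ P n := fun n => mul_nonneg (ha0 n).le (by linarith [hbanti n])
  have hQ0 : ∀ n, 0 ≤ Q n := fun n =>
    mul_nonneg (by linarith [hamono (Nat.le_succ n)]) (hb0 (n + 1))
  have identity : ∀ K : ℕ, ∑ i ∈ Finset.range K, P i
      = (∑ i ∈ Finset.range K, Q i) + (a 0 * b 0 - a K * b K) := by
    intro K
    have h1 : ∑ i ∈ Finset.range K, (a i * b i - a (i + 1) * b (i + 1))
        = a 0 * b 0 - a K * b K := Finset.sum_range_sub' (fun i => a i * b i) K
    have h2 : ∀ i ∈ Finset.range K,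
        P i = Q i + (a i * b i - a (i + 1) * b (i + 1)) := fun i _ => by
      simp only [hP, hQ]; ring
    rw [Finset.sum_congr rfl h2, Finset.sum_add_distrib, h1]
  constructor
  · intro hPs
    have hbound : ∀ N, a N * b N ≤ ∑' n, P n := by
      intro N
      have key : ∀ K : ℕ, a N * (b N - b (N + K)) ≤ ∑' n, P n := by
        intro K
        have h1 : a N * (b N - b (N + K))
            = ∑ i ∈ Finset.range K, a N * (b (N + i) - b (N + i + 1)) := by
          have htel := Finset.sum_range_sub' (fun i => b (N + i)) K
          simp only [← Nat.add_assoc, Nat.add_zero] at htel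
          rw [← Finset.mul_sum, htel]
        rw [h1]
        calc ∑ i ∈ Finset.range K, a N * (b (N + i) - b (N + i + 1))
            ≤ ∑ i ∈ Finset.range K, a (N + i) * (b (N + i) - b (N + i + 1)) := by
              refine Finset.sum_le_sum fun i _ => ?_
              exact mul_le_mul_of_nonneg_right (hamono (Nat.le_add_right N i))
                (by linarith [hbanti (N + i)])
          _ = ∑ n ∈ Finset.Ico N (N + K), P n := by
              rw [Finset.sum_Ico_eq_sum_range, Nat.add_sub_cancel_left]
          _ ≤ ∑' n, P n := Summable.sum_le_tsum _ (fun n _ => hP0 n) hPs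
      have htend : Tendsto (fun K => a N * (b N - b (N + K))) atTop
          (nhds (a N * b N)) := by
        have h1 : Tendsto (fun K => b (N + K)) atTop (nhds 0) :=
          (hblim.comp (tendsto_add_atTop_nat N)).congr fun K => by
            simp only [Function.comp_apply, add_comm]
        have h2 := ((tendsto_const_nhds (x := b N)).sub h1).const_mul (a N)
        simpa using h2
      exact le_of_tendsto htend (Filter.Eventually.of_forall key)
    apply summable_of_sum_range_le hQ0 (c := (∑' n, P n) + ∑' n, P n)
    intro K
    have hid := identity K
    have h1 : ∑ i ∈ Finset.range K, P i ≤ ∑' n, P n :=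
      Summable.sum_le_tsum _ (fun n _ => hP0 n) hPs
    have h2 := hbound K
    have h3 : 0 ≤ a 0 * b 0 := mul_nonneg (ha0 0).le (hb0 0)
    linarith
  · intro hQs
    apply summable_of_sum_range_le hP0 (c := (∑' n, Q n) + a 0 * b 0)
    intro K
    have hid := identity K
    have h1 : ∑ i ∈ Finset.range K, Q i ≤ ∑' n, Q n :=
      Summable.sum_le_tsum _ (fun n _ => hQ0 n) hQs
    have h2 : 0 ≤ a K * b K := mul_nonneg (ha0 K).le (hb0 K)
    linarith

private lemma exp_sub_one_le {x : ℝ} (h0 : 0 < x) (hh : x ≤ 1 / 2) :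
    Real.exp x - 1 ≤ 2 * x := by
  have h1 : 1 + (-x) ≤ Real.exp (-x) := by linarith [Real.add_one_le_exp (-x)]
  have h2 : Real.exp (-x) * Real.exp x = 1 := by
    rw [← Real.exp_add]; simp
  have h3 : Real.exp x - 1 ≤ x * Real.exp x := by nlinarith [Real.exp_pos x]
  have h4 : Real.exp x ≤ Real.exp (1 / 2) := Real.exp_le_exp.2 hh
  have h5 : Real.exp (1 / 2) < 2 := by
    have he : Real.exp (1 / 2) * Real.exp (1 / 2) = Real.exp 1 := by
      rw [← Real.exp_add]; norm_num
    nlinarith [Real.exp_one_lt_d9, Real.exp_pos (1 / 2)]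
  nlinarith

private lemma summableQ_iff (hℓ : LengthSeq ℓ) (hθ : ThetaCond ℓ) (hβ : 0 < β) :
    Summable (fun m : ℕ =>
        (Real.exp (Sl ℓ (m + 1 + 1)) - Real.exp (Sl ℓ (m + 1))) * ℓ (m + 1 + 1) ^ β)
      ↔ coverSeriesSummable ℓ β := by
  obtain ⟨M₀, M₁, hM₀, hM₀₁, hM⟩ := hθ
  have hM₁ : 0 < M₁ := hM₀.trans_le hM₀₁
  set Q : ℕ → ℝ := fun m =>
    (Real.exp (Sl ℓ (m + 1 + 1)) - Real.exp (Sl ℓ (m + 1))) * ℓ (m + 1 + 1) ^ β with hQdef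
  set g : ℕ → ℝ := fun n => Real.exp (Sl ℓ n) / (n : ℝ) ^ (1 + β) with hgdef
  have hcov : coverSeriesSummable ℓ β ↔ Summable g := Iff.rfl
  have hg0 : ∀ n, 0 ≤ g n := fun n => by
    apply div_nonneg (Real.exp_nonneg _)
    positivity
  have hQ0 : ∀ m, 0 ≤ Q m := fun m => by
    have h1 : Real.exp (Sl ℓ (m + 1)) ≤ Real.exp (Sl ℓ (m + 1 + 1)) :=
      Real.exp_le_exp.2 (Sl_mono hℓ (Nat.le_succ _))
    have h2 : (0:ℝ) ≤ ℓ (m + 1 + 1) ^ β := (rpow_pos' hℓ (by omega)).le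
    simp only [hQdef]
    exact mul_nonneg (by linarith) h2
  -- termwise bounds
  have hbounds : ∀ m : ℕ,
      (M₀ / 2) ^ (1 + β) * g (m + 1) ≤ Q m ∧ Q m ≤ (2 * M₁ ^ (1 + β)) * g (m + 1) := by
    intro m
    set x : ℝ := ℓ (m + 2) with hxdef
    have hx0 : 0 < x := hℓ.pos _ (by omega)
    have hxh : x ≤ 1 / 2 := ell_le_half hℓ (by omega)
    have hcast : ((m + 2 : ℕ) : ℝ) = (m : ℝ) + 2 := by push_cast; ring
    have hx1 : M₀ / ((m : ℝ) + 2) ≤ x := by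
      have := (hM (m + 2) (by omega)).1; rwa [hcast] at this
    have hx2 : x ≤ M₁ / ((m : ℝ) + 2) := by
      have := (hM (m + 2) (by omega)).2; rwa [hcast] at this
    have hE : (0:ℝ) < Real.exp (Sl ℓ (m + 1)) := Real.exp_pos _
    set E : ℝ := Real.exp (Sl ℓ (m + 1)) with hEdef
    have hQeq : Q m = E * ((Real.exp x - 1) * x ^ β) := by
      simp only [hQdef, hEdef, hxdef]
      rw [show m + 1 + 1 = m + 2 from rfl, Sl_succ ℓ (m + 1), Real.exp_add]
      ring
    have hxb : (0:ℝ) < x ^ β := Real.rpow_pos_of_pos hx0 β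
    have hexplo : x ≤ Real.exp x - 1 := by linarith [Real.add_one_le_exp x]
    have hexphi : Real.exp x - 1 ≤ 2 * x := exp_sub_one_le hx0 hxh
    have hx1b : x * x ^ β = x ^ (1 + β) := by
      rw [Real.rpow_add hx0, Real.rpow_one]
    have hm1 : (0:ℝ) < (m : ℝ) + 1 := by positivity
    have hm2 : (0:ℝ) < (m : ℝ) + 2 := by positivity
    have hp : (0:ℝ) < ((m : ℝ) + 1) ^ (1 + β) := Real.rpow_pos_of_pos hm1 _
    have hg1 : g (m + 1) = E / ((m : ℝ) + 1) ^ (1 + β) := by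
      simp only [hgdef, hEdef]
      congr 2
      push_cast; ring
    constructor
    · -- lower bound
      have hxlo : (M₀ / 2) / ((m : ℝ) + 1) ≤ x := by
        have h1 : (M₀ / 2) / ((m : ℝ) + 1) ≤ M₀ / ((m : ℝ) + 2) := by
          rw [div_div]
          apply div_le_div_of_nonneg_left hM₀.le hm2
          nlinarith
        exact h1.trans hx1
      have hxlo' : ((M₀ / 2) / ((m : ℝ) + 1)) ^ (1 + β) ≤ x ^ (1 + β) :=
        Real.rpow_le_rpow (by positivity) hxlo (by positivity)
      have hsplit : ((M₀ / 2) / ((m : ℝ) + 1)) ^ (1 + β)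
          = (M₀ / 2) ^ (1 + β) / ((m : ℝ) + 1) ^ (1 + β) :=
        Real.div_rpow (by positivity) hm1.le _
      have hQlo : E * x ^ (1 + β) ≤ Q m := by
        rw [hQeq, ← hx1b]
        have : x * x ^ β ≤ (Real.exp x - 1) * x ^ β :=
          mul_le_mul_of_nonneg_right hexplo hxb.le
        nlinarith
      rw [hg1]
      calc (M₀ / 2) ^ (1 + β) * (E / ((m : ℝ) + 1) ^ (1 + β))
          = E * ((M₀ / 2) ^ (1 + β) / ((m : ℝ) + 1) ^ (1 + β)) := by ring
        _ = E * ((M₀ / 2) / ((m : ℝ) + 1)) ^ (1 + β) := by rw [hsplit]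
        _ ≤ E * x ^ (1 + β) := mul_le_mul_of_nonneg_left hxlo' hE.le
        _ ≤ Q m := hQlo
    · -- upper bound
      have hxhi : x ≤ M₁ / ((m : ℝ) + 1) := by
        refine hx2.trans ?_
        apply div_le_div_of_nonneg_left hM₁.le hm1
        linarith
      have hxhi' : x ^ (1 + β) ≤ (M₁ / ((m : ℝ) + 1)) ^ (1 + β) :=
        Real.rpow_le_rpow hx0.le hxhi (by positivity)
      have hsplit : (M₁ / ((m : ℝ) + 1)) ^ (1 + β)
          = M₁ ^ (1 + β) / ((m : ℝ) + 1) ^ (1 + β) := Real.div_rpow hM₁.le hm1.le _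
      have hQhi : Q m ≤ 2 * (E * x ^ (1 + β)) := by
        rw [hQeq, ← hx1b]
        have : (Real.exp x - 1) * x ^ β ≤ (2 * x) * x ^ β :=
          mul_le_mul_of_nonneg_right hexphi hxb.le
        nlinarith
      rw [hg1]
      calc Q m ≤ 2 * (E * x ^ (1 + β)) := hQhi
        _ ≤ 2 * (E * (M₁ ^ (1 + β) / ((m : ℝ) + 1) ^ (1 + β))) := by
            rw [← hsplit]
            exact mul_le_mul_of_nonneg_left
              (mul_le_mul_of_nonneg_left hxhi' hE.le) (by norm_num)
        _ = (2 * M₁ ^ (1 + β)) * (E / ((m : ℝ) + 1) ^ (1 + β)) := by ring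
  have hc₁ : (0:ℝ) < (M₀ / 2) ^ (1 + β) := Real.rpow_pos_of_pos (by positivity) _
  rw [hcov]
  constructor
  · intro hQs
    rw [← summable_nat_add_iff 1]
    refine Summable.of_nonneg_of_le (fun m => hg0 (m + 1)) (fun m => ?_)
      (hQs.mul_left ((M₀ / 2) ^ (1 + β))⁻¹)
    rw [inv_mul_eq_div, le_div_iff₀ hc₁, mul_comm]
    exact (hbounds m).1
  · intro hgs
    refine Summable.of_nonneg_of_le hQ0 (fun m => (hbounds m).2) ?_
    exact ((summable_nat_add_iff 1).2 hgs).mul_left _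

end Lemma21Aux


open MeasureTheory in
/-- Lemma 2.1: for `β > 0` and any `b > 0`,
`∫₀^b exp (Σ_{n : ℓ_n^β ≥ t} ℓ_n) dt < ∞` iff `Σ_{n≥1} e^{ℓ_1+⋯+ℓ_n}/n^{1+β} < ∞`. -/
theorem integral_exp_tailSum_finite_iff_coverSeries_summable
    (ℓ : ℕ → ℝ) (hℓ : LengthSeq ℓ) (hθ : ThetaCond ℓ) (β : ℝ) (hβ : 0 < β) :
    ∀ b : ℝ, 0 < b →
      ((∫⁻ t in Set.Ioc (0 : ℝ) b, ENNReal.ofReal (Real.exp (tailSum ℓ β t))) < ⊤ ↔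
        coverSeriesSummable ℓ β) := by
  intro b hb
  set f : ℝ → ENNReal := fun t => ENNReal.ofReal (Real.exp (tailSum ℓ β t)) with hf
  have hL : 0 < ℓ 1 ^ β := Lemma21Aux.rpow_pos' hℓ le_rfl
  have htail : ∀ u v : ℝ, 0 < u → u ≤ v → (∫⁻ t in Set.Ioc u v, f t) < ⊤ := by
    intro u v hu huv
    have hle : ∀ t ∈ Set.Ioc u v, f t ≤ ENNReal.ofReal (Real.exp (tailSum ℓ β u)) := by
      intro t ht
      exact ENNReal.ofReal_le_ofReal
        (Real.exp_le_exp.2 (Lemma21Aux.tailSum_anti hℓ hβ hu ht.1.le))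
    calc (∫⁻ t in Set.Ioc u v, f t)
        ≤ ∫⁻ _ in Set.Ioc u v, ENNReal.ofReal (Real.exp (tailSum ℓ β u)) :=
          setLIntegral_mono measurable_const hle
      _ = ENNReal.ofReal (Real.exp (tailSum ℓ β u)) * volume (Set.Ioc u v) :=
          setLIntegral_const _ _
      _ < ⊤ := by
          rw [Real.volume_Ioc]
          exact ENNReal.mul_lt_top ENNReal.ofReal_lt_top ENNReal.ofReal_lt_top
  set c : ℝ := min b (ℓ 1 ^ β) with hc
  have hc0 : 0 < c := lt_min hb hL
  have split1 : (∫⁻ t in Set.Ioc (0:ℝ) b, f t)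
      = (∫⁻ t in Set.Ioc (0:ℝ) c, f t) + ∫⁻ t in Set.Ioc c b, f t := by
    rw [← lintegral_union measurableSet_Ioc (Set.Ioc_disjoint_Ioc_of_le le_rfl),
      Set.Ioc_union_Ioc_eq_Ioc hc0.le (min_le_left _ _)]
  have split2 : (∫⁻ t in Set.Ioc (0:ℝ) (ℓ 1 ^ β), f t)
      = (∫⁻ t in Set.Ioc (0:ℝ) c, f t) + ∫⁻ t in Set.Ioc c (ℓ 1 ^ β), f t := by
    rw [← lintegral_union measurableSet_Ioc (Set.Ioc_disjoint_Ioc_of_le le_rfl),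
      Set.Ioc_union_Ioc_eq_Ioc hc0.le (min_le_right _ _)]
  have key : (∫⁻ t in Set.Ioc (0:ℝ) b, f t) < ⊤
      ↔ (∫⁻ t in Set.Ioc (0:ℝ) (ℓ 1 ^ β), f t) < ⊤ := by
    rw [split1, split2, ENNReal.add_lt_top, ENNReal.add_lt_top]
    have h1 := htail c b hc0 (min_le_left _ _)
    have h2 := htail c (ℓ 1 ^ β) hc0 (min_le_right _ _)
    tauto
  rw [key, Lemma21Aux.integral_lt_top_iff hℓ hβ]
  exact (Lemma21Aux.abel_summable
      (a := fun m => Real.exp (Lemma21Aux.Sl ℓ (m + 1)))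
      (b := fun m => ℓ (m + 1) ^ β)
      (fun n => Real.exp_pos _)
      (monotone_nat_of_le_succ fun n =>
        Real.exp_le_exp.2 (Lemma21Aux.Sl_mono hℓ (Nat.le_succ _)))
      (fun n => (Lemma21Aux.rpow_pos' hℓ (by omega)).le)
      (fun n => Lemma21Aux.rpow_anti hℓ hβ (by omega) (by omega))
      (by
        have h1 : Filter.Tendsto (fun m : ℕ => ℓ (m + 1)) Filter.atTop (nhds 0) :=
          (hℓ.tendsto_zero.comp (Filter.tendsto_add_atTop_nat 1))
        have h2 := h1.rpow_const (p := β) (Or.inr hβ.le)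
        rwa [Real.zero_rpow hβ.ne'] at h2)).trans
    (Lemma21Aux.summableQ_iff hℓ hθ hβ)


end
end

section
/- Let {ℓ_n}_{n≥1} be a decreasing sequence of positive reals tending to 0 satisfying condition (Θ), and set u_n := ∏_{k=1}^n (1 − ℓ_k). Then sup{ β : liminf_n n^β u_n < ∞ } ≥ inf{ β : Σ_{n=1}^∞ e^{ℓ_1+ℓ_2+⋯+ℓ_n} / n^{1+β} < ∞ } = limsup_n (ℓ_1+ℓ_2+⋯+ℓ_n) / log n. -/
open Filter Set

noncomputable section

section AuxLemma22

open Filter in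
private lemma aux_S_mono (ℓ : ℕ → ℝ) (hℓ : LengthSeq ℓ) {m n : ℕ} (h : m ≤ n) :
    ∑ k ∈ Finset.Icc 1 m, ℓ k ≤ ∑ k ∈ Finset.Icc 1 n, ℓ k :=
  Finset.sum_le_sum_of_subset_of_nonneg (Finset.Icc_subset_Icc_right h)
    fun k hk _ => (hℓ.pos k (Finset.mem_Icc.mp hk).1).le

private lemma aux_harmonic_cast (n : ℕ) :
    ((harmonic n : ℚ) : ℝ) = ∑ k ∈ Finset.Icc 1 n, ((k : ℝ))⁻¹ := by
  rw [harmonic_eq_sum_Icc]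
  push_cast
  rfl

private lemma aux_S_lower (ℓ : ℕ → ℝ) {M₀ : ℝ} (hM₀ : 0 < M₀)
    (h : ∀ n : ℕ, 1 ≤ n → M₀ / n ≤ ℓ n) {n : ℕ} (hn : 1 ≤ n) :
    M₀ * Real.log n ≤ ∑ k ∈ Finset.Icc 1 n, ℓ k := by
  have h1 : Real.log n ≤ ((harmonic n : ℚ) : ℝ) := by
    refine le_trans ?_ (log_add_one_le_harmonic n)
    have : (0:ℝ) < n := by exact_mod_cast hn
    exact Real.log_le_log this (by push_cast; linarith)
  calc M₀ * Real.log n ≤ M₀ * ((harmonic n : ℚ) : ℝ) :=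
        mul_le_mul_of_nonneg_left h1 hM₀.le
    _ = ∑ k ∈ Finset.Icc 1 n, M₀ / (k : ℝ) := by
        rw [aux_harmonic_cast, Finset.mul_sum]
        refine Finset.sum_congr rfl fun k _ => ?_
        rw [div_eq_mul_inv]
    _ ≤ ∑ k ∈ Finset.Icc 1 n, ℓ k :=
        Finset.sum_le_sum fun k hk => h k (Finset.mem_Icc.mp hk).1

private lemma aux_S_upper (ℓ : ℕ → ℝ) {M₁ : ℝ} (hM₁ : 0 < M₁)
    (h : ∀ n : ℕ, 1 ≤ n → ℓ n ≤ M₁ / n) (n : ℕ) :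
    ∑ k ∈ Finset.Icc 1 n, ℓ k ≤ M₁ * (1 + Real.log n) := by
  calc ∑ k ∈ Finset.Icc 1 n, ℓ k ≤ ∑ k ∈ Finset.Icc 1 n, M₁ / (k : ℝ) :=
        Finset.sum_le_sum fun k hk => h k (Finset.mem_Icc.mp hk).1
    _ = M₁ * ((harmonic n : ℚ) : ℝ) := by
        rw [aux_harmonic_cast, Finset.mul_sum]
        refine Finset.sum_congr rfl fun k _ => ?_
        rw [div_eq_mul_inv]
    _ ≤ M₁ * (1 + Real.log n) :=
        mul_le_mul_of_nonneg_left (by exact_mod_cast harmonic_le_one_add_log n) hM₁.le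

open Filter in
private lemma aux_summable (ℓ : ℕ → ℝ) {β ε : ℝ} (hε : 0 < ε)
    (h : ∀ᶠ n : ℕ in atTop, ∑ k ∈ Finset.Icc 1 n, ℓ k ≤ (β - ε) * Real.log n) :
    coverSeriesSummable ℓ β := by
  obtain ⟨N, hN⟩ := eventually_atTop.1 h
  unfold coverSeriesSummable
  rw [← summable_nat_add_iff (N + 1)]
  have hsum : Summable (fun n : ℕ => ((n + (N + 1) : ℕ) : ℝ) ^ (-(1 + ε))) :=
    (summable_nat_add_iff (f := fun n : ℕ => ((n : ℝ)) ^ (-(1 + ε))) (N + 1)).2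
      (Real.summable_nat_rpow.2 (by linarith))
  refine Summable.of_nonneg_of_le (fun n => by positivity) (fun n => ?_) hsum
  set m : ℕ := n + (N + 1) with hm
  have hm1 : 1 ≤ m := by omega
  have hmR : (1:ℝ) ≤ (m:ℝ) := by exact_mod_cast hm1
  have hmpos : (0:ℝ) < (m:ℝ) := by linarith
  have hS : ∑ k ∈ Finset.Icc 1 m, ℓ k ≤ (β - ε) * Real.log m := hN m (by omega)
  have h1 : Real.exp (∑ k ∈ Finset.Icc 1 m, ℓ k) ≤ (m:ℝ) ^ (β - ε) := by
    rw [Real.rpow_def_of_pos hmpos]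
    exact Real.exp_le_exp.2 (by rw [mul_comm]; exact hS)
  calc Real.exp (∑ k ∈ Finset.Icc 1 m, ℓ k) / (m:ℝ) ^ (1 + β)
      ≤ (m:ℝ) ^ (β - ε) / (m:ℝ) ^ (1 + β) :=
        div_le_div₀ (Real.rpow_nonneg hmpos.le _) h1 (Real.rpow_pos_of_pos hmpos _) le_rfl
    _ = (m:ℝ) ^ (-(1 + ε)) := by
        rw [← Real.rpow_sub hmpos]
        congr 1
        ring

open Filter in
private lemma aux_exp_le (ℓ : ℕ → ℝ) (hℓ : LengthSeq ℓ) {β : ℝ}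
    (hs : coverSeriesSummable ℓ β) :
    ∃ D : ℝ, 0 < D ∧ ∀ n : ℕ, 1 ≤ n →
      Real.exp (∑ k ∈ Finset.Icc 1 n, ℓ k) ≤ D * (n:ℝ) ^ β := by
  set f : ℕ → ℝ := fun n => Real.exp (∑ k ∈ Finset.Icc 1 n, ℓ k) / (n:ℝ) ^ (1 + β) with hf
  have hf0 : ∀ n, 0 ≤ f n := fun n => by positivity
  set C := ∑' n, f n with hC
  have hCpos : 0 < C := by
    have h1 : f 1 ≤ C := Summable.le_tsum hs 1 fun m _ => hf0 m
    have h2 : 0 < f 1 := by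
      simp only [hf]
      positivity
    linarith
  set K := max ((2:ℝ) ^ (1 + β)) 1 with hK
  have hK1 : (1:ℝ) ≤ K := le_max_right _ _
  have hKpos : (0:ℝ) < K := lt_of_lt_of_le one_pos hK1
  refine ⟨C * K, by positivity, fun n hn => ?_⟩
  have hnR : (1:ℝ) ≤ (n:ℝ) := by exact_mod_cast hn
  have hn0 : (0:ℝ) < (n:ℝ) := by linarith
  have hQ : (0:ℝ) < (n:ℝ) ^ β := Real.rpow_pos_of_pos hn0 _
  have hP : (0:ℝ) < (n:ℝ) ^ (1 + β) := Real.rpow_pos_of_pos hn0 _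
  have hblock : ∀ m ∈ Finset.Ioc n (2 * n),
      Real.exp (∑ k ∈ Finset.Icc 1 n, ℓ k) / (K * (n:ℝ) ^ (1 + β)) ≤ f m := by
    intro m hm
    obtain ⟨hm1, hm2⟩ := Finset.mem_Ioc.1 hm
    have hmn : (n:ℝ) ≤ (m:ℝ) := by exact_mod_cast hm1.le
    have hm2n : (m:ℝ) ≤ 2 * (n:ℝ) := by exact_mod_cast hm2
    have hmpos : (0:ℝ) < (m:ℝ) := lt_of_lt_of_le hn0 hmn
    have hSm : ∑ k ∈ Finset.Icc 1 n, ℓ k ≤ ∑ k ∈ Finset.Icc 1 m, ℓ k :=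
      aux_S_mono ℓ hℓ hm1.le
    have hpow : (m:ℝ) ^ (1 + β) ≤ K * (n:ℝ) ^ (1 + β) := by
      rcases le_or_gt 0 (1 + β) with hb | hb
      · calc (m:ℝ) ^ (1 + β) ≤ (2 * (n:ℝ)) ^ (1 + β) :=
              Real.rpow_le_rpow hmpos.le hm2n hb
          _ = 2 ^ (1 + β) * (n:ℝ) ^ (1 + β) := Real.mul_rpow (by norm_num) hn0.le
          _ ≤ K * (n:ℝ) ^ (1 + β) :=
              mul_le_mul_of_nonneg_right (le_max_left _ _) hP.le
      · calc (m:ℝ) ^ (1 + β) ≤ (n:ℝ) ^ (1 + β) :=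
              Real.rpow_le_rpow_of_nonpos hn0 hmn hb.le
          _ ≤ K * (n:ℝ) ^ (1 + β) := le_mul_of_one_le_left hP.le hK1
    exact div_le_div₀ (Real.exp_pos _).le (Real.exp_le_exp.2 hSm)
      (Real.rpow_pos_of_pos hmpos _) hpow
  have hcard : (Finset.Ioc n (2 * n)).card = n := by rw [Nat.card_Ioc]; omega
  have hsumle : ∑ m ∈ Finset.Ioc n (2 * n), f m ≤ C :=
    Summable.sum_le_tsum _ (fun m _ => hf0 m) hs
  have hsumge : (n:ℝ) * (Real.exp (∑ k ∈ Finset.Icc 1 n, ℓ k) / (K * (n:ℝ) ^ (1 + β)))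
      ≤ ∑ m ∈ Finset.Ioc n (2 * n), f m := by
    have h3 := Finset.card_nsmul_le_sum (Finset.Ioc n (2 * n)) f _ hblock
    rwa [hcard, nsmul_eq_mul] at h3
  have hrw : (n:ℝ) ^ (1 + β) = (n:ℝ) * (n:ℝ) ^ β := by
    rw [Real.rpow_add hn0, Real.rpow_one]
  have heq : (n:ℝ) * (Real.exp (∑ k ∈ Finset.Icc 1 n, ℓ k) / (K * (n:ℝ) ^ (1 + β)))
      = Real.exp (∑ k ∈ Finset.Icc 1 n, ℓ k) / (K * (n:ℝ) ^ β) := by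
    rw [hrw]
    field_simp
  rw [heq] at hsumge
  have h2 := hsumge.trans hsumle
  rw [div_le_iff₀ (by positivity)] at h2
  calc Real.exp (∑ k ∈ Finset.Icc 1 n, ℓ k) ≤ C * (K * (n:ℝ) ^ β) := h2
    _ = C * K * (n:ℝ) ^ β := by ring

open Filter in
private lemma aux_liminf_lt_top (ℓ : ℕ → ℝ) (hℓ : LengthSeq ℓ) {β : ℝ}
    (h : ∃ᶠ n : ℕ in atTop, 1 ≤ n ∧ β * Real.log n ≤ ∑ k ∈ Finset.Icc 1 n, ℓ k) :
    Filter.liminf (fun n : ℕ => ENNReal.ofReal ((n : ℝ) ^ β * partProd ℓ n))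
      Filter.atTop < ⊤ := by
  have hfac : ∀ k : ℕ, 1 ≤ k → 0 ≤ 1 - ℓ k := by
    intro k hk
    have h1 := hℓ.anti 1 k le_rfl hk
    have h2 := hℓ.first_le
    linarith
  have hfreq : ∃ᶠ n : ℕ in atTop,
      ENNReal.ofReal ((n : ℝ) ^ β * partProd ℓ n) ≤ 1 := by
    refine h.mono fun n hn => ?_
    obtain ⟨hn1, hnS⟩ := hn
    have hn0 : (0:ℝ) < (n:ℝ) := by exact_mod_cast hn1
    have hu_le : partProd ℓ n ≤ Real.exp (-(∑ k ∈ Finset.Icc 1 n, ℓ k)) := by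
      rw [← Finset.sum_neg_distrib, Real.exp_sum]
      refine Finset.prod_le_prod (fun k hk => hfac k (Finset.mem_Icc.mp hk).1)
        (fun k _ => ?_)
      linarith [Real.add_one_le_exp (-ℓ k)]
    have hpow : (n:ℝ) ^ β = Real.exp (β * Real.log n) := by
      rw [Real.rpow_def_of_pos hn0, mul_comm]
    have h1 : (n:ℝ) ^ β * partProd ℓ n ≤ 1 := by
      calc (n:ℝ) ^ β * partProd ℓ n
          ≤ Real.exp (β * Real.log n) * Real.exp (-(∑ k ∈ Finset.Icc 1 n, ℓ k)) := by
            rw [hpow]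
            exact mul_le_mul_of_nonneg_left hu_le (Real.exp_pos _).le
        _ = Real.exp (β * Real.log n - ∑ k ∈ Finset.Icc 1 n, ℓ k) := by
            rw [← Real.exp_add]
            ring_nf
        _ ≤ 1 := Real.exp_le_one_iff.2 (by linarith)
    calc ENNReal.ofReal ((n : ℝ) ^ β * partProd ℓ n) ≤ ENNReal.ofReal 1 :=
          ENNReal.ofReal_le_ofReal h1
      _ = 1 := ENNReal.ofReal_one
  exact lt_of_le_of_lt (Filter.liminf_le_of_frequently_le' hfreq) (by norm_num)

end AuxLemma22

/-- Lemma 2.2: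
`sup {β : liminf_n n^β u_n < ∞} ≥ inf {β : Σ_n e^{ℓ_1+⋯+ℓ_n}/n^{1+β} < ∞}`
and the latter infimum equals `limsup_n (ℓ_1+⋯+ℓ_n)/log n` (all in the extended reals). -/
theorem sup_liminf_ge_inf_coverSeries_eq_limsup
    (ℓ : ℕ → ℝ) (hℓ : LengthSeq ℓ) (hθ : ThetaCond ℓ) :
    (sInf {b : EReal | ∃ β : ℝ, b = (β : EReal) ∧ coverSeriesSummable ℓ β}
        ≤ sSup {b : EReal | ∃ β : ℝ, b = (β : EReal) ∧
            Filter.liminf (fun n : ℕ => ENNReal.ofReal ((n : ℝ) ^ β * partProd ℓ n))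
              Filter.atTop < ⊤}) ∧
      sInf {b : EReal | ∃ β : ℝ, b = (β : EReal) ∧ coverSeriesSummable ℓ β}
        = Filter.limsup
            (fun n : ℕ => (((∑ k ∈ Finset.Icc 1 n, ℓ k) / Real.log n : ℝ) : EReal))
            Filter.atTop := by
  classical
  obtain ⟨M₀, M₁, hM₀, hM01, hM⟩ := hθ
  have hM₁ : 0 < M₁ := lt_of_lt_of_le hM₀ hM01
  set S : ℕ → ℝ := fun n => ∑ k ∈ Finset.Icc 1 n, ℓ k with hSdef
  set a : ℕ → ℝ := fun n => S n / Real.log n with hadef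
  have hl2 : (0:ℝ) < Real.log 2 := Real.log_pos (by norm_num)
  have hlogn : ∀ n : ℕ, 2 ≤ n → Real.log 2 ≤ Real.log n := by
    intro n hn
    exact Real.log_le_log (by norm_num) (by exact_mod_cast hn)
  have hub : ∀ᶠ n : ℕ in Filter.atTop, a n ≤ M₁ * (1 + (Real.log 2)⁻¹) := by
    filter_upwards [Filter.eventually_ge_atTop 2] with n hn
    have hlog2 := hlogn n hn
    have hlogpos : (0:ℝ) < Real.log n := lt_of_lt_of_le hl2 hlog2
    have hSup : S n ≤ M₁ * (1 + Real.log n) :=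
      aux_S_upper ℓ hM₁ (fun k hk => (hM k hk).2) n
    rw [hadef]
    simp only
    rw [div_le_iff₀ hlogpos]
    have key : M₁ * (1 + (Real.log 2)⁻¹) * Real.log n
        = M₁ * Real.log n + M₁ * ((Real.log 2)⁻¹ * Real.log n) := by ring
    have h5 : (1:ℝ) ≤ (Real.log 2)⁻¹ * Real.log n := by
      rw [← inv_mul_cancel₀ (ne_of_gt hl2)]
      exact mul_le_mul_of_nonneg_left hlog2 (inv_nonneg.2 hl2.le)
    nlinarith
  have hlb : ∀ᶠ n : ℕ in Filter.atTop, M₀ ≤ a n := by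
    filter_upwards [Filter.eventually_ge_atTop 2] with n hn
    have hlogpos : (0:ℝ) < Real.log n := lt_of_lt_of_le hl2 (hlogn n hn)
    have hSlo : M₀ * Real.log n ≤ S n :=
      aux_S_lower ℓ hM₀ (fun k hk => (hM k hk).1) (by omega)
    rw [hadef]
    simp only
    rw [le_div_iff₀ hlogpos]
    exact hSlo
  have hbdd : Filter.IsBoundedUnder (· ≤ ·) Filter.atTop a :=
    Filter.isBoundedUnder_of_eventually_le hub
  have hbddge : Filter.IsBoundedUnder (· ≥ ·) Filter.atTop a :=
    Filter.isBoundedUnder_of_eventually_ge hlb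
  have hcob : Filter.IsCoboundedUnder (· ≤ ·) Filter.atTop a :=
    hbddge.isCoboundedUnder_le
  set L : ℝ := Filter.limsup a Filter.atTop with hLdef
  -- summability above L
  have hsum : ∀ β : ℝ, L < β → coverSeriesSummable ℓ β := by
    intro β hβ
    set ε : ℝ := (β - L) / 2 with hεdef
    have hε : 0 < ε := by rw [hεdef]; linarith
    have hLβ : L < β - ε := by rw [hεdef]; linarith
    have hev : ∀ᶠ n : ℕ in Filter.atTop, a n < β - ε :=
      Filter.eventually_lt_of_limsup_lt hLβ hbdd
    refine aux_summable ℓ hε ?_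
    filter_upwards [hev, Filter.eventually_ge_atTop 2] with n h1 h2
    have hlogpos : (0:ℝ) < Real.log n := lt_of_lt_of_le hl2 (hlogn n h2)
    have := (div_lt_iff₀ hlogpos).1 h1
    exact this.le
  -- L ≤ β for summable β
  have hle : ∀ β : ℝ, coverSeriesSummable ℓ β → L ≤ β := by
    intro β hsβ
    obtain ⟨D, hD, hbound⟩ := aux_exp_le ℓ hℓ hsβ
    by_contra hcon
    push_neg at hcon
    set ε : ℝ := (L - β) / 2 with hεdef
    have hε : 0 < ε := by rw [hεdef]; linarith
    have : L ≤ β + ε := by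
      refine Filter.limsup_le_of_le hcob ?_
      have hlogT : Filter.Tendsto (fun n : ℕ => Real.log n) Filter.atTop Filter.atTop :=
        Real.tendsto_log_atTop.comp tendsto_natCast_atTop_atTop
      filter_upwards [hlogT.eventually_ge_atTop (|Real.log D| / ε),
        Filter.eventually_ge_atTop 2] with n h1 h2
      have hlogpos : (0:ℝ) < Real.log n := lt_of_lt_of_le hl2 (hlogn n h2)
      have hn0 : (0:ℝ) < (n:ℝ) := by
        have : (2:ℝ) ≤ (n:ℝ) := by exact_mod_cast h2
        linarith
      have hS : S n ≤ Real.log D + β * Real.log n := by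
        have h4 := hbound n (by omega)
        have h5 := Real.log_le_log (Real.exp_pos _) h4
        rwa [Real.log_exp, Real.log_mul (ne_of_gt hD)
          (ne_of_gt (Real.rpow_pos_of_pos hn0 β)), Real.log_rpow hn0] at h5
      have hD' : Real.log D ≤ ε * Real.log n := by
        have h6 : |Real.log D| ≤ Real.log n * ε := (div_le_iff₀ hε).1 h1
        have h7 := le_abs_self (Real.log D)
        linarith
      rw [hadef]
      simp only
      rw [div_le_iff₀ hlogpos]
      linarith
    rw [hεdef] at this
    linarith
  -- membership below L
  have hmem : ∀ β : ℝ, β < L →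
      Filter.liminf (fun n : ℕ => ENNReal.ofReal ((n : ℝ) ^ β * partProd ℓ n))
        Filter.atTop < ⊤ := by
    intro β hβ
    refine aux_liminf_lt_top ℓ hℓ ?_
    have hfreq : ∃ᶠ n : ℕ in Filter.atTop, β < a n :=
      Filter.frequently_lt_of_lt_limsup hcob hβ
    refine (hfreq.and_eventually (Filter.eventually_ge_atTop 2)).mono ?_
    rintro n ⟨h1, h2⟩
    have hlogpos : (0:ℝ) < Real.log n := lt_of_lt_of_le hl2 (hlogn n h2)
    refine ⟨by omega, ?_⟩
    have := (lt_div_iff₀ hlogpos).1 h1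
    linarith
  -- sInf = L
  have hInf : sInf {b : EReal | ∃ β : ℝ, b = (β : EReal) ∧ coverSeriesSummable ℓ β}
      = (L : EReal) := by
    refine le_antisymm ?_ ?_
    · by_contra hcon
      push_neg at hcon
      obtain ⟨x, hx1, hx2⟩ := EReal.lt_iff_exists_real_btwn.1 hcon
      have hx1' : L < x := by exact_mod_cast hx1
      have hxmem : ((x : ℝ) : EReal) ∈
          {b : EReal | ∃ β : ℝ, b = (β : EReal) ∧ coverSeriesSummable ℓ β} :=
        ⟨x, rfl, hsum x hx1'⟩
      exact absurd (sInf_le hxmem) (not_le.2 hx2)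
    · refine le_sInf ?_
      rintro b ⟨β, rfl, hβ⟩
      exact_mod_cast hle β hβ
  have hcoe : Filter.limsup (fun n : ℕ => ((a n : ℝ) : EReal)) Filter.atTop
      = ((L : ℝ) : EReal) := by
    have hmono : Monotone (Real.toEReal) := fun x y h => EReal.coe_le_coe_iff.2 h
    have h := hmono.map_limsup_of_continuousAt (F := Filter.atTop) a
      (continuous_coe_real_ereal.continuousAt) hbdd hcob
    exact h.symm
  constructor
  · rw [hInf]
    by_contra hcon
    push_neg at hcon
    obtain ⟨x, hx1, hx2⟩ := EReal.lt_iff_exists_real_btwn.1 hcon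
    have hx2' : x < L := by exact_mod_cast hx2
    have hxmem : ((x : ℝ) : EReal) ∈
        {b : EReal | ∃ β : ℝ, b = (β : EReal) ∧
          Filter.liminf (fun n : ℕ => ENNReal.ofReal ((n : ℝ) ^ β * partProd ℓ n))
            Filter.atTop < ⊤} :=
      ⟨x, rfl, hmem x hx2'⟩
    exact absurd (le_sSup hxmem) (not_le.2 hx1)
  · rw [hInf]
    exact hcoe.symm


end
end

section
/- There exists a constant C > 0 such that for all t ∈ (0,1], all a ∈ [0,1] and all b ∈ (−1/2, 1/2): if Z* is a real normal random variable with mean 0 and variance t, then Σ_{k∈ℤ} P( Z* ∈ (k+b−a, k+b+a) ) ≤ C · P( Z* ∈ (b−a, b+a) ). -/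
open Filter Set

noncomputable section

section GaussHelpers

open MeasureTheory ProbabilityTheory Real

variable {t : ℝ}

private lemma gauss_pdf_shift (ht : 0 < t) (y z : ℝ) :
    gaussianPDFReal 0 t.toNNReal y
      = Real.exp ((z ^ 2 - y ^ 2) / (2 * t)) * gaussianPDFReal 0 t.toNNReal z := by
  have hct : ((t.toNNReal : ℝ)) = t := Real.coe_toNNReal t ht.le
  have h : (z ^ 2 - y ^ 2) / (2 * t) + -z ^ 2 / (2 * t) = -y ^ 2 / (2 * t) := by
    rw [← add_div]; ring_nf
  simp only [gaussianPDFReal, sub_zero, hct]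
  rw [mul_left_comm, ← Real.exp_add, h]

private lemma gauss_pdf_le (ht : 0 < t) {y z : ℝ} (h : z ^ 2 ≤ y ^ 2) :
    gaussianPDFReal 0 t.toNNReal y ≤ gaussianPDFReal 0 t.toNNReal z := by
  rw [gauss_pdf_shift ht y z]
  have h1 : Real.exp ((z ^ 2 - y ^ 2) / (2 * t)) ≤ 1 := by
    rw [Real.exp_le_one_iff]
    apply div_nonpos_of_nonpos_of_nonneg (by linarith) (by linarith)
  exact mul_le_of_le_one_left (gaussianPDFReal_nonneg _ _ _) h1

private lemma gauss_intervalIntegrable (u w : ℝ) :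
    IntervalIntegrable (gaussianPDFReal 0 t.toNNReal) volume u w :=
  (integrable_gaussianPDFReal 0 t.toNNReal).intervalIntegrable

private lemma gauss_intervalIntegrable_shift (s u w : ℝ) :
    IntervalIntegrable (fun x => gaussianPDFReal 0 t.toNNReal (x + s)) volume u w := by
  have : (fun x => gaussianPDFReal 0 t.toNNReal (x + s))
      = gaussianPDFReal (0 - s) t.toNNReal := by
    funext x; exact gaussianPDFReal_add x s
  rw [this]
  exact (integrable_gaussianPDFReal _ _).intervalIntegrable

private lemma gauss_meas_Ioo (ht : 0 < t) {u w : ℝ} (h : u ≤ w) :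
    gaussianReal 0 t.toNNReal (Set.Ioo u w)
      = ENNReal.ofReal (∫ x in u..w, gaussianPDFReal 0 t.toNNReal x) := by
  have hv : t.toNNReal ≠ 0 := (Real.toNNReal_pos.mpr ht).ne'
  rw [gaussianReal_apply_eq_integral _ hv, intervalIntegral.integral_of_le h,
    integral_Ioc_eq_integral_Ioo]

private lemma gauss_integral_center_mono (ht : 0 < t) {a c' c : ℝ} (ha : 0 ≤ a)
    (hc' : 0 ≤ c') (hcc : c' ≤ c) :
    (∫ x in (c - a)..(c + a), gaussianPDFReal 0 t.toNNReal x)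
      ≤ ∫ x in (c' - a)..(c' + a), gaussianPDFReal 0 t.toNNReal x := by
  set f := gaussianPDFReal 0 t.toNNReal with hf
  rcases le_or_gt (c' + a) (c - a) with hord | hord
  · -- the two intervals are essentially disjoint; shift by s := c - c'
    have hshift : (∫ x in (c - a)..(c + a), f x)
        = ∫ x in (c' - a)..(c' + a), f (x + (c - c')) := by
      rw [intervalIntegral.integral_comp_add_right f (c - c')]
      congr 1 <;> ring
    rw [hshift]
    refine intervalIntegral.integral_mono_on (by linarith)
      (gauss_intervalIntegrable_shift _ _ _) (gauss_intervalIntegrable _ _) ?_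
    intro x hx
    obtain ⟨hx1, hx2⟩ := hx
    exact gauss_pdf_le ht (by nlinarith)
  · -- overlapping intervals
    have k1 : (∫ x in (c - a)..(c' + a), f x) + (∫ x in (c' + a)..(c + a), f x)
        = ∫ x in (c - a)..(c + a), f x :=
      intervalIntegral.integral_add_adjacent_intervals
        (gauss_intervalIntegrable _ _) (gauss_intervalIntegrable _ _)
    have k2 : (∫ x in (c' - a)..(c - a), f x) + (∫ x in (c - a)..(c' + a), f x)
        = ∫ x in (c' - a)..(c' + a), f x :=
      intervalIntegral.integral_add_adjacent_intervals
        (gauss_intervalIntegrable _ _) (gauss_intervalIntegrable _ _)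
    have key : (∫ x in (c' + a)..(c + a), f x) ≤ ∫ x in (c' - a)..(c - a), f x := by
      have hshift : (∫ x in (c' + a)..(c + a), f x)
          = ∫ x in (c' - a)..(c - a), f (x + (2 * a)) := by
        rw [intervalIntegral.integral_comp_add_right f (2 * a)]
        congr 1 <;> ring
      rw [hshift]
      refine intervalIntegral.integral_mono_on (by linarith)
        (gauss_intervalIntegrable_shift _ _ _) (gauss_intervalIntegrable _ _) ?_
      intro x hx
      obtain ⟨hx1, hx2⟩ := hx
      exact gauss_pdf_le ht (by nlinarith)
    linarith

private lemma gauss_meas_center_mono (ht : 0 < t) {a c' c : ℝ} (ha : 0 ≤ a)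
    (hc' : 0 ≤ c') (hcc : c' ≤ c) :
    gaussianReal 0 t.toNNReal (Set.Ioo (c - a) (c + a))
      ≤ gaussianReal 0 t.toNNReal (Set.Ioo (c' - a) (c' + a)) := by
  rw [gauss_meas_Ioo ht (by linarith), gauss_meas_Ioo ht (by linarith)]
  exact ENNReal.ofReal_le_ofReal (gauss_integral_center_mono ht ha hc' hcc)

private lemma gauss_meas_center_abs (ht : 0 < t) (x a : ℝ) :
    gaussianReal 0 t.toNNReal (Set.Ioo (x - a) (x + a))
      = gaussianReal 0 t.toNNReal (Set.Ioo (|x| - a) (|x| + a)) := by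
  set f := gaussianPDFReal 0 t.toNNReal with hf
  rcases le_or_gt a 0 with ha | ha
  · rw [Set.Ioo_eq_empty (by intro hlt; linarith : ¬ (x - a < x + a)),
      Set.Ioo_eq_empty (by intro hlt; linarith : ¬ (|x| - a < |x| + a))]
  · rcases abs_cases x with ⟨h1, _⟩ | ⟨h1, _⟩
    · rw [h1]
    · rw [h1]
      rw [gauss_meas_Ioo ht (by linarith), gauss_meas_Ioo ht (by linarith)]
      congr 1
      have heven : ∀ y, f (-y) = f y := by
        intro y; simp only [hf, gaussianPDFReal, sub_zero, neg_sq]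
      calc (∫ y in (x - a)..(x + a), f y) = ∫ y in (x - a)..(x + a), f (-y) := by
            refine intervalIntegral.integral_congr fun y _ => (heven y).symm
        _ = ∫ y in (-(x + a))..(-(x - a)), f y := intervalIntegral.integral_comp_neg f
        _ = ∫ y in (-x - a)..(-x + a), f y := by congr 1 <;> ring
  
end GaussHelpers

set_option maxHeartbeats 1000000 in
open MeasureTheory ProbabilityTheory in
/-- Lemma 2.3: there is a constant `C > 0` such that for all `t ∈ (0,1]`, `a ∈ [0,1]` and
`b ∈ (-1/2, 1/2)`, if `Z*` is a centered normal random variable of variance `t`, then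
`Σ_{k ∈ ℤ} P(Z* ∈ (k+b-a, k+b+a)) ≤ C · P(Z* ∈ (b-a, b+a))`. -/
theorem gaussian_interval_translates_sum_le :
    ∃ C : NNReal, 0 < C ∧
      ∀ t ∈ Set.Ioc (0 : ℝ) 1, ∀ a ∈ Set.Icc (0 : ℝ) 1,
        ∀ b ∈ Set.Ioo (-(1 / 2) : ℝ) (1 / 2),
          (∑' k : ℤ,
              gaussianReal 0 (Real.toNNReal t)
                (Set.Ioo ((k : ℝ) + b - a) ((k : ℝ) + b + a)))
            ≤ (C : ENNReal) * gaussianReal 0 (Real.toNNReal t) (Set.Ioo (b - a) (b + a)) := by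
  refine ⟨(4 * Real.exp 8).toNNReal, Real.toNNReal_pos.mpr (by positivity), ?_⟩
  intro t ht a ha b hb
  obtain ⟨ht0, ht1⟩ := ht
  obtain ⟨ha0, ha1⟩ := ha
  obtain ⟨hbl, hbr⟩ := hb
  have hb' : |b| ≤ 1 / 2 := by rw [abs_le]; constructor <;> linarith
  have habs0 : (0:ℝ) ≤ |b| := abs_nonneg b
  set f : ℝ → ℝ := gaussianPDFReal 0 t.toNNReal with hfdef
  set μ : MeasureTheory.Measure ℝ := gaussianReal 0 t.toNNReal with hmu
  set q : ENNReal := ENNReal.ofReal (Real.exp (-2)) with hqdef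
  set A : ENNReal := ENNReal.ofReal (Real.exp 8) with hAdef
  -- the k = 0 term is at least `2a · f(|b|+a)`
  have hP0eq : μ (Set.Ioo (b - a) (b + a)) = μ (Set.Ioo (|b| - a) (|b| + a)) :=
    gauss_meas_center_abs ht0 b a
  have hP0low : ENNReal.ofReal (2 * a * f (|b| + a)) ≤ μ (Set.Ioo (b - a) (b + a)) := by
    rw [hP0eq, gauss_meas_Ioo ht0 (by linarith)]
    apply ENNReal.ofReal_le_ofReal
    calc 2 * a * f (|b| + a) = ∫ _x in (|b| - a)..(|b| + a), f (|b| + a) := by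
          rw [intervalIntegral.integral_const, smul_eq_mul]; ring
      _ ≤ ∫ x in (|b| - a)..(|b| + a), f x := by
          refine intervalIntegral.integral_mono_on (by linarith) intervalIntegrable_const
            (gauss_intervalIntegrable _ _) fun x hx => ?_
          exact gauss_pdf_le ht0 (by nlinarith [hx.1, hx.2])
  have hAq : ∀ n : ℕ, A * q ^ n = ENNReal.ofReal (Real.exp (8 - 2 * (n : ℝ))) := by
    intro n
    rw [hAdef, hqdef, ← ENNReal.ofReal_pow (Real.exp_pos _).le,
      ← ENNReal.ofReal_mul (Real.exp_pos _).le, ← Real.exp_nat_mul, ← Real.exp_add]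
    congr 2
    ring
  have key : ∀ k : ℤ, μ (Set.Ioo ((k:ℝ) + b - a) ((k:ℝ) + b + a))
      ≤ A * q ^ k.natAbs * μ (Set.Ioo (b - a) (b + a)) := by
    intro k
    have hkabs : |(k:ℝ)| = (k.natAbs : ℝ) := by
      simp [Nat.cast_natAbs]
    set n := k.natAbs with hn
    set c := |(k:ℝ) + b| with hc
    have hcge : |(k:ℝ)| - |b| ≤ c := by
      have h := abs_add_le ((k:ℝ) + b) (-b)
      simp only [add_neg_cancel_right, abs_neg] at h
      linarith
    have hPk : μ (Set.Ioo ((k:ℝ) + b - a) ((k:ℝ) + b + a)) = μ (Set.Ioo (c - a) (c + a)) :=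
      gauss_meas_center_abs ht0 _ a
    rw [hPk]
    rcases le_or_gt n 3 with hn3 | hn3
    · -- |k| ≤ 3 : monotonicity in the center
      have hbc : |b| ≤ c := by
        rcases eq_or_ne k 0 with rfl | hk
        · simp [hc]
        · have h1 : (1:ℝ) ≤ |(k:ℝ)| := by
            rw [← Int.cast_abs]; exact_mod_cast Int.one_le_abs hk
          linarith
      have h1 : μ (Set.Ioo (c - a) (c + a)) ≤ μ (Set.Ioo (b - a) (b + a)) := by
        rw [hP0eq]; exact gauss_meas_center_mono ht0 ha0 habs0 hbc
      have h2 : (1:ENNReal) ≤ A * q ^ n := by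
        rw [hAq n, ENNReal.one_le_ofReal]
        rw [Real.one_le_exp_iff]
        have h3 : (n:ℝ) ≤ 3 := by exact_mod_cast hn3
        linarith
      calc μ (Set.Ioo (c - a) (c + a)) ≤ μ (Set.Ioo (b - a) (b + a)) := h1
        _ = 1 * μ (Set.Ioo (b - a) (b + a)) := (one_mul _).symm
        _ ≤ A * q ^ n * μ (Set.Ioo (b - a) (b + a)) := mul_le_mul_left h2 _
    · -- |k| ≥ 4 : Gaussian decay
      have hn4 : (4:ℝ) ≤ (n:ℝ) := by exact_mod_cast hn3
      have hcn : (n:ℝ) - 1 / 2 ≤ c := by rw [hkabs] at hcge; linarith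
      have h0ca : 0 ≤ c - a := by linarith
      rw [gauss_meas_Ioo ht0 (by linarith : c - a ≤ c + a)]
      have up : (∫ x in (c - a)..(c + a), f x) ≤ 2 * a * f (c - a) := by
        calc (∫ x in (c - a)..(c + a), f x) ≤ ∫ _x in (c - a)..(c + a), f (c - a) := by
              refine intervalIntegral.integral_mono_on (by linarith)
                (gauss_intervalIntegrable _ _) intervalIntegrable_const fun x hx => ?_
              exact gauss_pdf_le ht0 (by nlinarith [hx.1, hx.2])
          _ = 2 * a * f (c - a) := by rw [intervalIntegral.integral_const, smul_eq_mul]; ring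
      have ratio : f (c - a) ≤ Real.exp (8 - 2 * (n:ℝ)) * f (|b| + a) := by
        rw [hfdef, gauss_pdf_shift ht0 (c - a) (|b| + a)]
        refine mul_le_mul_of_nonneg_right ?_ (gaussianPDFReal_nonneg _ _ _)
        rw [Real.exp_le_exp]
        have e1 : |b| + a ≤ 3 / 2 := by linarith
        have e2 : (n:ℝ) - 3 / 2 ≤ c - a := by linarith
        have hw : ((|b| + a) ^ 2 - (c - a) ^ 2) ≤ 3 * (n:ℝ) - (n:ℝ) ^ 2 := by nlinarith
        have hwn : ((|b| + a) ^ 2 - (c - a) ^ 2) ≤ 0 := by nlinarith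
        have h2 : ((|b| + a) ^ 2 - (c - a) ^ 2) / (2 * t)
            ≤ ((|b| + a) ^ 2 - (c - a) ^ 2) / 2 := by
          rw [div_eq_mul_inv, div_eq_mul_inv]
          have hinv : (2:ℝ)⁻¹ ≤ (2 * t)⁻¹ := by
            apply inv_anti₀ (by linarith) (by linarith)
          exact mul_le_mul_of_nonpos_left hinv hwn
        have h3 : (3 * (n:ℝ) - (n:ℝ) ^ 2) / 2 ≤ 8 - 2 * (n:ℝ) := by nlinarith
        calc ((|b| + a) ^ 2 - (c - a) ^ 2) / (2 * t)
            ≤ ((|b| + a) ^ 2 - (c - a) ^ 2) / 2 := h2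
          _ ≤ (3 * (n:ℝ) - (n:ℝ) ^ 2) / 2 := by linarith
          _ ≤ 8 - 2 * (n:ℝ) := h3
      calc ENNReal.ofReal (∫ x in (c - a)..(c + a), f x)
          ≤ ENNReal.ofReal (Real.exp (8 - 2 * (n:ℝ)) * (2 * a * f (|b| + a))) := by
            apply ENNReal.ofReal_le_ofReal
            refine up.trans ?_
            calc 2 * a * f (c - a)
                ≤ 2 * a * (Real.exp (8 - 2 * (n:ℝ)) * f (|b| + a)) :=
                  mul_le_mul_of_nonneg_left ratio (by linarith)
              _ = Real.exp (8 - 2 * (n:ℝ)) * (2 * a * f (|b| + a)) := by ring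
        _ = ENNReal.ofReal (Real.exp (8 - 2 * (n:ℝ))) * ENNReal.ofReal (2 * a * f (|b| + a)) :=
            ENNReal.ofReal_mul (Real.exp_pos _).le
        _ ≤ A * q ^ n * μ (Set.Ioo (b - a) (b + a)) := by
            rw [← hAq n]; exact mul_le_mul' le_rfl hP0low
  -- summing the geometric bound
  have hq2 : q ≤ 2⁻¹ := by
    have h1 : Real.exp (-2) ≤ (2:ℝ)⁻¹ := by
      rw [Real.exp_neg]
      have h2 : (2:ℝ) ≤ Real.exp 2 := by linarith [Real.add_one_le_exp (2:ℝ)]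
      exact inv_anti₀ (by norm_num) h2
    calc q ≤ ENNReal.ofReal ((2:ℝ)⁻¹) := ENNReal.ofReal_le_ofReal h1
      _ = 2⁻¹ := by
        rw [ENNReal.ofReal_inv_of_pos (by norm_num), ENNReal.ofReal_ofNat]
  have hq1 : q ≤ 1 := hq2.trans (by simp)
  have hgeom : (∑' m : ℕ, q ^ m) ≤ 2 := by
    calc (∑' m : ℕ, q ^ m) ≤ ∑' m : ℕ, (2⁻¹:ENNReal) ^ m :=
          ENNReal.tsum_le_tsum fun m => pow_le_pow_left₀ (zero_le (a := q)) hq2 m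
      _ = (1 - 2⁻¹)⁻¹ := ENNReal.tsum_geometric _
      _ = 2 := by rw [ENNReal.one_sub_inv_two, inv_inv]
  have hsum : (∑' k : ℤ, A * q ^ k.natAbs) ≤ ENNReal.ofReal (4 * Real.exp 8) := by
    rw [ENNReal.tsum_mul_left]
    have hsplit := tsum_of_nat_of_neg_add_one (f := fun k : ℤ => q ^ k.natAbs)
      ENNReal.summable ENNReal.summable
    have e1 : (∑' m : ℕ, q ^ ((m:ℤ)).natAbs) ≤ 2 := by
      simpa [Int.natAbs_natCast] using hgeom
    have e2 : (∑' m : ℕ, q ^ ((-((m:ℤ) + 1)).natAbs)) ≤ 2 := by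
      refine le_trans (ENNReal.tsum_le_tsum fun m => ?_) hgeom
      have hm : ((-((m:ℤ) + 1)).natAbs) = m + 1 := by omega
      rw [hm, pow_succ]
      exact (mul_le_mul' le_rfl hq1).trans (by rw [mul_one])
    calc A * ∑' k : ℤ, q ^ k.natAbs
        ≤ A * (2 + 2) := by
          refine mul_le_mul' le_rfl ?_
          rw [hsplit]
          exact add_le_add e1 e2
      _ = ENNReal.ofReal (4 * Real.exp 8) := by
          rw [ENNReal.ofReal_mul (by norm_num : (0:ℝ) ≤ 4), ENNReal.ofReal_ofNat,
            mul_comm, hAdef]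
          norm_num
  have hC : (((4 * Real.exp 8).toNNReal : NNReal) : ENNReal) = ENNReal.ofReal (4 * Real.exp 8) := rfl
  calc (∑' k : ℤ, μ (Set.Ioo ((k:ℝ) + b - a) ((k:ℝ) + b + a)))
      ≤ ∑' k : ℤ, A * q ^ k.natAbs * μ (Set.Ioo (b - a) (b + a)) := ENNReal.tsum_le_tsum key
    _ = (∑' k : ℤ, A * q ^ k.natAbs) * μ (Set.Ioo (b - a) (b + a)) := ENNReal.tsum_mul_right
    _ ≤ (((4 * Real.exp 8).toNNReal : NNReal) : ENNReal) * μ (Set.Ioo (b - a) (b + a)) := by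
        rw [hC]; exact mul_le_mul_left hsum _

end
end
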